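/- If a chain code U satisfies qturn(P) ∈ {-1, 0, 1} for every prefix P of U, then the y-coordinates along its unfolding dual path are weakly monotonically nondecreasing. -/

import Mathlib

inductive TurnSym : Type
  | L | R | S
deriving DecidableEq

def qt : TurnSym → ℤ
  | TurnSym.L => -1
  | TurnSym.R => 1
  | TurnSym.S => 0

def qturn (U : List TurnSym) : ℤ := (U.map qt).sum

def rot : TurnSym → ℤ × ℤ → ℤ × ℤ
  | TurnSym.R, d => (d.2, -d.1)
  | TurnSym.L, d => (-d.2, d.1)
  | TurnSym.S, d => d

def pathStep (s : (ℤ × ℤ) × (ℤ × ℤ)) (a : TurnSym) : (ℤ × ℤ) × (ℤ × ℤ) :=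
  let d := rot a s.2
  (s.1 + d, d)

/-- Points p_0 = (0,0), p_1 = (0,1), ..., p_{n+1} of the unfolding dual path. -/
def pts (U : List TurnSym) : List (ℤ × ℤ) :=
  (0, 0) :: (List.scanl pathStep ((0, 1), (0, 1)) U).map Prod.fst

/-- 90° clockwise rotation. -/
def cw (d : ℤ × ℤ) : ℤ × ℤ := (d.2, -d.1)

/-- Final heading after processing a chain code from initial heading (0,1). -/
def headAfter (U : List TurnSym) : ℤ × ℤ := U.foldl (fun d a => rot a d) (0, 1)

/-- Reflection of a chain code: swap L and R. -/
def reflCode (U : List TurnSym) : List TurnSym :=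
  U.map fun a => match a with
    | TurnSym.L => TurnSym.R
    | TurnSym.R => TurnSym.L
    | TurnSym.S => TurnSym.S

/-- Action of a chain code on an arbitrary initial heading. -/
def act (U : List TurnSym) (d : ℤ × ℤ) : ℤ × ℤ := U.foldl (fun d a => rot a d) d

def g (n : ℤ) : ℤ × ℤ :=
  if n % 4 = 0 then (0, 1) else if n % 4 = 1 then (1, 0)
  else if n % 4 = 2 then (0, -1) else (-1, 0)

lemma rot_g (a : TurnSym) (n : ℤ) : rot a (g n) = g (n + qt a) := by
  rcases (by omega : n % 4 = 0 ∨ n % 4 = 1 ∨ n % 4 = 2 ∨ n % 4 = 3) with h|h|h|h <;>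
  cases a <;> simp only [rot, qt, g] <;>
    simp only [show (n + -1) % 4 = (n % 4 + 3) % 4 by omega, show (n + 1) % 4 = (n % 4 + 1) % 4 by omega, add_zero, h] <;> norm_num

lemma act_eq_g (U : List TurnSym) (n : ℤ) : act U (g n) = g (n + qturn U) := by
  induction U generalizing n with
  | nil => simp [act, qturn]
  | cons a U ih =>
    have : act (a :: U) (g n) = act U (rot a (g n)) := rfl
    rw [this, rot_g, ih]
    simp [qturn]
    ring_nf

lemma g_snd_nonneg (n : ℤ) (hn : n % 4 ≠ 2) : 0 ≤ (g n).2 := by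
  rw [g]; split_ifs <;> norm_num <;> omega

lemma key (U : List TurnSym) (s : (ℤ × ℤ) × (ℤ × ℤ))
    (h : ∀ (P : List TurnSym) (a : TurnSym), P ++ [a] <+: U →
      0 ≤ (act (P ++ [a]) s.2).2) :
    List.Chain' (fun p q : ℤ × ℤ => p.2 ≤ q.2)
      ((List.scanl pathStep s U).map Prod.fst) := by
  induction U generalizing s with
  | nil => simp [List.Chain']
  | cons a U ih =>
    rw [List.scanl_cons, List.map_cons]
    have h1 : 0 ≤ (rot a s.2).2 := by
      have := h [] a ⟨U, rfl⟩
      simpa [act] using this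
    have h2 := ih (pathStep s a) (by
      intro P b hPb
      have e1 : act (P ++ [b]) (pathStep s a).2 = act (a :: (P ++ [b])) s.2 := rfl
      rw [e1]
      have e2 : a :: (P ++ [b]) = (a :: P) ++ [b] := rfl
      rw [e2]
      exact h (a :: P) b (by
        obtain ⟨T, hT⟩ := hPb
        exact ⟨T, by simp [← hT]⟩))
    rw [List.Chain', List.isChain_cons]
    refine ⟨?_, h2⟩
    intro q hq
    have : (List.scanl pathStep (pathStep s a) U).head? = some (pathStep s a) := by
      cases U <;> simp
    rw [List.head?_map, this] at hq
    simp at hq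
    subst hq
    show s.1.2 ≤ (pathStep s a).1.2
    simp [pathStep, Prod.snd_add]
    omega

theorem stmt1 (U : List TurnSym)
    (h : ∀ P, P <+: U → qturn P ∈ ({-1, 0, 1} : Set ℤ)) :
    List.Chain' (fun p q : ℤ × ℤ => p.2 ≤ q.2) (pts U) := by
  rw [pts, List.Chain', List.isChain_cons]
  constructor
  · intro q hq
    have : (List.scanl pathStep ((0,1),(0,1)) U).head? = some ((0,1),(0,1)) := by
      cases U <;> simp
    rw [List.head?_map, this] at hq
    simp at hq
    subst hq
    norm_num
  · apply key
    intro P a hPa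
    have hq := h (P ++ [a]) hPa
    rw [show ((((0:ℤ),(1:ℤ)),((0:ℤ),(1:ℤ))) : (ℤ×ℤ)×(ℤ×ℤ)).2 = g 0 from by
      norm_num [g]]
    rw [act_eq_g]
    apply g_snd_nonneg
    simp at hq
    rcases hq with h'|h'|h' <;> rw [h'] <;> omega
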